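/- arXiv:1102.3104 — 3 statements merged into one kernel-verified Lean document; each statement's English description precedes it below -/
import Mathlib

section
/- Let w₁, w₂ be holomorphic on the unit disc with Wronskian w₁w₂' - w₁'w₂ ≡ 1 and satisfying |w₁(z)|² + |w₂(z)|² ≤ 1/ε for all z in the disc, where ε > 0. Then the spherical derivative of f = w₁/w₂ satisfies f^#(z) ≤ (2/ε)/(1-|z|)² for all z ∈ 𝔻. -/
open Complex Metric Topology Filter

/-- The spherical derivative `f^#(z) = |f'(z)| / (1 + |f(z)|^2)`. -/
noncomputable def sphDeriv (f : ℂ → ℂ) (z : ℂ) : ℝ :=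
  ‖deriv f z‖ / (1 + ‖f z‖ ^ 2)

lemma cauchy_est {w : ℂ → ℂ} {z : ℂ} {ρ M : ℝ} (hρ : 0 < ρ)
    (hsub : closedBall z ρ ⊆ ball (0 : ℂ) 1)
    (hd : DifferentiableOn ℂ w (ball (0 : ℂ) 1))
    (hM : ∀ t ∈ ball (0 : ℂ) 1, ‖w t‖ ≤ M) : ‖deriv w z‖ ≤ M / ρ := by
  apply Complex.norm_deriv_le_of_forall_mem_sphere_norm_le hρ
  · refine DifferentiableOn.diffContOnCl ?_
    rw [closure_ball z hρ.ne']
    exact hd.mono hsub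
  · exact fun t ht => hM t (hsub (sphere_subset_closedBall ht))

/-- If `w₁, w₂` are holomorphic on the unit disc with Wronskian `≡ 1` and
`|w₁|² + |w₂|² ≤ 1/ε`, then `f = w₁/w₂` satisfies `f^#(z) ≤ (2/ε)/(1-|z|)²`. -/
theorem stmt3 (ε : ℝ) (hε : 0 < ε) (w₁ w₂ : ℂ → ℂ)
    (h₁ : DifferentiableOn ℂ w₁ (ball (0 : ℂ) 1))
    (h₂ : DifferentiableOn ℂ w₂ (ball (0 : ℂ) 1))
    (hW : ∀ z ∈ ball (0 : ℂ) 1, w₁ z * deriv w₂ z - deriv w₁ z * w₂ z = 1)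
    (hb : ∀ z ∈ ball (0 : ℂ) 1, ‖w₁ z‖ ^ 2 + ‖w₂ z‖ ^ 2 ≤ 1 / ε) :
    ∀ z ∈ ball (0 : ℂ) 1,
      sphDeriv (fun t => w₁ t / w₂ t) z ≤ (2 / ε) / (1 - ‖z‖) ^ 2 := by
  intro z hz
  have hz1 : ‖z‖ < 1 := by simpa using hz
  set r : ℝ := 1 - ‖z‖ with hr_def
  have hr : 0 < r := by rw [hr_def]; linarith
  set a : ℝ := ‖w₁ z‖ with ha_def
  set b : ℝ := ‖w₂ z‖ with hb_def
  set M : ℝ := Real.sqrt (1 / ε) with hM_def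
  have hMnn : 0 ≤ M := Real.sqrt_nonneg _
  have hM2 : M ^ 2 = 1 / ε := Real.sq_sqrt (by positivity)
  have hM1 : ∀ t ∈ ball (0 : ℂ) 1, ‖w₁ t‖ ≤ M := by
    intro t ht
    have := hb t ht
    nlinarith [sq_nonneg (‖w₁ t‖ - M), sq_nonneg ‖w₂ t‖, norm_nonneg (w₁ t)]
  have hM2' : ∀ t ∈ ball (0 : ℂ) 1, ‖w₂ t‖ ≤ M := by
    intro t ht
    have := hb t ht
    nlinarith [sq_nonneg (‖w₂ t‖ - M), sq_nonneg ‖w₁ t‖, norm_nonneg (w₂ t)]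
  -- key lower bound on a^2 + b^2
  have key : ε * r ^ 2 ≤ 2 * (a ^ 2 + b ^ 2) := by
    have hev : ∀ᶠ ρ in 𝓝[<] r, ε * ρ ^ 2 ≤ 2 * (a ^ 2 + b ^ 2) := by
      filter_upwards [self_mem_nhdsWithin,
        eventually_nhdsWithin_of_eventually_nhds (eventually_gt_nhds hr)] with ρ h1 h2
      have hρr : ρ < r := h1
      have hρ : 0 < ρ := h2
      have hsub : closedBall z ρ ⊆ ball (0 : ℂ) 1 := by
        intro t ht
        simp only [mem_closedBall, dist_eq_norm] at ht
        simp only [mem_ball, dist_zero_right]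
        calc ‖t‖ ≤ ‖t - z‖ + ‖z‖ := by simpa using norm_add_le (t - z) z
          _ ≤ ρ + ‖z‖ := by linarith
          _ < 1 := by simp [hr_def] at hρr ⊢; linarith
      have d1 : ‖deriv w₁ z‖ ≤ M / ρ := cauchy_est hρ hsub h₁ hM1
      have d2 : ‖deriv w₂ z‖ ≤ M / ρ := cauchy_est hρ hsub h₂ hM2'
      have hW1 : (1 : ℝ) ≤ a * (M / ρ) + (M / ρ) * b := by
        calc (1 : ℝ) = ‖w₁ z * deriv w₂ z - deriv w₁ z * w₂ z‖ := by rw [hW z hz]; simp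
          _ ≤ ‖w₁ z * deriv w₂ z‖ + ‖deriv w₁ z * w₂ z‖ := norm_sub_le _ _
          _ = ‖w₁ z‖ * ‖deriv w₂ z‖ + ‖deriv w₁ z‖ * ‖w₂ z‖ := by rw [norm_mul, norm_mul]
          _ ≤ a * (M / ρ) + (M / ρ) * b := by
              have h3 := mul_le_mul_of_nonneg_left d2 (norm_nonneg (w₁ z))
              have h4 := mul_le_mul_of_nonneg_right d1 (norm_nonneg (w₂ z))
              simp only [ha_def, hb_def]
              linarith
      have hρM : ρ ≤ M * (a + b) := by
        have := mul_le_mul_of_nonneg_left hW1 hρ.le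
        have hne : ρ ≠ 0 := hρ.ne'
        field_simp at this
        nlinarith [this]
      have hsq : ρ ^ 2 ≤ (M * (a + b)) ^ 2 := by
        have h0 : 0 ≤ M * (a + b) := by positivity
        nlinarith
      have hεM : ε * M ^ 2 = 1 := by rw [hM2]; field_simp
      nlinarith [sq_nonneg (a - b), hε.le, sq_nonneg (a + b),
        mul_le_mul_of_nonneg_left hsq hε.le]
    exact le_of_tendsto (((continuous_const.mul (continuous_pow 2)).tendsto r).mono_left
      nhdsWithin_le_nhds) hev
  by_cases hw2 : w₂ z = 0
  · -- pole: f not differentiable at z, so deriv = 0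
    have hwd : deriv w₂ z ≠ 0 := by
      intro h
      have := hW z hz
      rw [hw2, h] at this
      simp at this
    have hw1 : w₁ z ≠ 0 := by
      intro h
      have := hW z hz
      rw [hw2, h] at this
      simp at this
    have hnd : ¬ DifferentiableAt ℂ (fun t => w₁ t / w₂ t) z := by
      intro hd
      have hc : Filter.Tendsto (fun t => w₁ t / w₂ t) (𝓝[≠] z) (𝓝 (0 : ℂ)) := by
        have := hd.continuousAt.tendsto
        rw [show w₁ z / w₂ z = 0 by simp [hw2]] at this
        exact this.mono_left nhdsWithin_le_nhds
      have hc2 : Filter.Tendsto w₂ (𝓝[≠] z) (𝓝 (0 : ℂ)) := by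
        have := ((h₂.continuousOn.continuousAt (isOpen_ball.mem_nhds hz)).tendsto)
        rw [hw2] at this
        exact this.mono_left nhdsWithin_le_nhds
      have hmul : Filter.Tendsto (fun t => (w₁ t / w₂ t) * w₂ t) (𝓝[≠] z)
          (𝓝 (0 : ℂ)) := by simpa using hc.mul hc2
      have han : AnalyticAt ℂ w₂ z := h₂.analyticAt (isOpen_ball.mem_nhds hz)
      have hne : ∀ᶠ t in 𝓝[≠] z, w₂ t ≠ 0 := by
        rcases han.eventually_eq_zero_or_eventually_ne_zero with h | h
        · exfalso
          apply hwd
          have : deriv w₂ z = deriv (fun _ => (0 : ℂ)) z := Filter.EventuallyEq.deriv_eq h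
          simpa using this
        · exact h
      have heq : ∀ᶠ t in 𝓝[≠] z, (w₁ t / w₂ t) * w₂ t = w₁ t := by
        filter_upwards [hne] with t ht
        field_simp
      have hw1t : Filter.Tendsto w₁ (𝓝[≠] z) (𝓝 (w₁ z)) :=
        ((h₁.continuousOn.continuousAt (isOpen_ball.mem_nhds hz)).tendsto).mono_left
          nhdsWithin_le_nhds
      have : w₁ z = 0 := tendsto_nhds_unique hw1t (Filter.Tendsto.congr' heq hmul)
      exact hw1 this
    rw [sphDeriv, deriv_zero_of_not_differentiableAt hnd]
    simp only [norm_zero, zero_div]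
    positivity
  · -- regular point
    have hd1 : DifferentiableAt ℂ w₁ z := h₁.differentiableAt (isOpen_ball.mem_nhds hz)
    have hd2 : DifferentiableAt ℂ w₂ z := h₂.differentiableAt (isOpen_ball.mem_nhds hz)
    have hdf : deriv (fun t => w₁ t / w₂ t) z
        = (deriv w₁ z * w₂ z - w₁ z * deriv w₂ z) / (w₂ z) ^ 2 := deriv_div hd1 hd2 hw2
    have hnum : deriv w₁ z * w₂ z - w₁ z * deriv w₂ z = -1 := by
      have := hW z hz
      linear_combination -this
    have hbpos : 0 < b := by simpa [hb_def] using norm_pos_iff.2 hw2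
    have hsph : sphDeriv (fun t => w₁ t / w₂ t) z = 1 / (a ^ 2 + b ^ 2) := by
      have hbne : b ≠ 0 := hbpos.ne'
      rw [sphDeriv, hdf, hnum]
      simp only [norm_div, norm_neg, norm_one, norm_pow]
      rw [← ha_def, ← hb_def]
      rw [div_pow]
      field_simp
      ring
    rw [hsph]
    rw [div_le_div_iff₀ (by nlinarith) (by positivity)]
    rw [hr_def] at key ⊢
    rw [div_mul_eq_mul_div, le_div_iff₀ hε]
    nlinarith
end

section
/- Let w₁, w₂ be holomorphic on the unit disc with w₁(0) = 0 and Wronskian w₁w₂' - w₁'w₂ ≡ 1, and set f = w₁/w₂, f^# = 1/(|w₁|²+|w₂|²). Then for every r ∈ (0,1), min_{|z|=r} |z| f^#(z) ≤ 1/2; consequently inf_{z∈𝔻} f^#(z) ≤ 1/2. -/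
open Complex Metric

private lemma stmt13_key (w₁ w₂ : ℂ → ℂ)
    (h₁ : DifferentiableOn ℂ w₁ (ball (0 : ℂ) 1))
    (h₂ : DifferentiableOn ℂ w₂ (ball (0 : ℂ) 1))
    (h0 : w₁ 0 = 0)
    (hW : ∀ z ∈ ball (0 : ℂ) 1, w₁ z * deriv w₂ z - deriv w₁ z * w₂ z = 1)
    (r : ℝ) (hr0 : 0 < r) (hr1 : r < 1) :
    ∃ z : ℂ, ‖z‖ = r ∧ r ≤ ‖w₁ z‖ * ‖w₂ z‖ := by
  set v : ℂ → ℂ := fun z => dslope w₁ 0 z * w₂ z with hv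
  have h0mem : (0 : ℂ) ∈ ball (0 : ℂ) 1 := by simp
  -- v is differentiable on the unit ball
  have hvdiff : DifferentiableOn ℂ v (ball (0 : ℂ) 1) := by
    have hd : DifferentiableOn ℂ (dslope w₁ 0) (ball (0 : ℂ) 1) := by
      intro z hz
      rcases eq_or_ne z 0 with rfl | hne
      · -- analytic at 0
        have ha : AnalyticAt ℂ w₁ 0 := (h₁.analyticOnNhd isOpen_ball) 0 h0mem
        rcases ha with ⟨p, hp⟩
        exact ((hp.has_fpower_series_dslope_fslope).analyticAt).differentiableAt.differentiableWithinAt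
      · have heq : dslope w₁ 0 =ᶠ[nhds z] fun x => x⁻¹ * w₁ x := by
          filter_upwards [isOpen_ne.mem_nhds hne] with x hx
          simp [dslope_of_ne _ hx, slope, h0, smul_eq_mul]
        have hdiff : DifferentiableAt ℂ (fun x => x⁻¹ * w₁ x) z := by
          exact (differentiableAt_inv hne).mul ((h₁ z hz).differentiableAt
            (isOpen_ball.mem_nhds hz))
        exact (hdiff.congr_of_eventuallyEq heq).differentiableWithinAt
    exact hd.mul h₂
  -- value at 0
  have hv0 : ‖v 0‖ = 1 := by
    have := hW 0 h0mem
    rw [h0, zero_mul, zero_sub, neg_eq_iff_eq_neg] at this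
    simp [hv, dslope_same, this]
  -- maximum principle on the ball of radius r
  have hsub : closedBall (0 : ℂ) r ⊆ ball (0 : ℂ) 1 :=
    closedBall_subset_ball hr1
  have hcont : ContinuousOn v (closedBall (0 : ℂ) r) :=
    (hvdiff.continuousOn).mono hsub
  have hcompact : IsCompact (sphere (0 : ℂ) r) := isCompact_sphere 0 r
  have hne : (sphere (0 : ℂ) r).Nonempty := NormedSpace.sphere_nonempty.mpr hr0.le
  obtain ⟨z₀, hz₀mem, hz₀max⟩ := hcompact.exists_isMaxOn hne
    ((hcont.mono sphere_subset_closedBall).norm)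
  have hmax : ‖v 0‖ ≤ ‖v z₀‖ := by
    refine Complex.norm_le_of_forall_mem_frontier_norm_le (U := ball (0:ℂ) r) isBounded_ball ?_ ?_ ?_
    · exact ⟨hvdiff.mono (ball_subset_ball hr1.le),
        hcont.mono (by rw [closure_ball _ hr0.ne'])⟩
    · intro w hw
      rw [frontier_ball _ hr0.ne'] at hw
      exact hz₀max hw
    · exact subset_closure (mem_ball_self hr0)
  have hz₀norm : ‖z₀‖ = r := by simpa using hz₀mem
  have hz₀ne : z₀ ≠ 0 := by
    intro h; rw [h, norm_zero] at hz₀norm; linarith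
  refine ⟨z₀, hz₀norm, ?_⟩
  have hvz₀ : ‖v z₀‖ = ‖w₁ z₀‖ * ‖w₂ z₀‖ / r := by
    simp only [hv, dslope_of_ne _ hz₀ne, slope, h0, sub_zero, smul_eq_mul, vsub_eq_sub]
    rw [norm_mul, norm_mul, norm_inv, hz₀norm]
    ring
  rw [hv0, hvz₀] at hmax
  calc r = 1 * r := (one_mul r).symm
    _ ≤ (‖w₁ z₀‖ * ‖w₂ z₀‖ / r) * r := by nlinarith
    _ = ‖w₁ z₀‖ * ‖w₂ z₀‖ := by field_simp

/-- If `w₁, w₂` are holomorphic on the unit disc with `w₁(0) = 0` and Wronskian `≡ 1`,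
and `f^# = 1/(|w₁|²+|w₂|²)`, then `min_{|z|=r} |z| f^#(z) ≤ 1/2` for each `0 < r < 1`,
and consequently `inf_𝔻 f^# ≤ 1/2`. -/
theorem stmt13 (w₁ w₂ : ℂ → ℂ)
    (h₁ : DifferentiableOn ℂ w₁ (ball (0 : ℂ) 1))
    (h₂ : DifferentiableOn ℂ w₂ (ball (0 : ℂ) 1))
    (h0 : w₁ 0 = 0)
    (hW : ∀ z ∈ ball (0 : ℂ) 1, w₁ z * deriv w₂ z - deriv w₁ z * w₂ z = 1) :
    (∀ r : ℝ, 0 < r → r < 1 →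
      ∃ z : ℂ, ‖z‖ = r ∧ ‖z‖ * (1 / (‖w₁ z‖ ^ 2 + ‖w₂ z‖ ^ 2)) ≤ 1 / 2) ∧
    (∀ δ : ℝ, 0 < δ →
      ∃ z ∈ ball (0 : ℂ) 1, 1 / (‖w₁ z‖ ^ 2 + ‖w₂ z‖ ^ 2) < 1 / 2 + δ) := by
  have key := stmt13_key w₁ w₂ h₁ h₂ h0 hW
  constructor
  · intro r hr0 hr1
    obtain ⟨z, hz, hge⟩ := key r hr0 hr1
    refine ⟨z, hz, ?_⟩
    have hS : 2 * r ≤ ‖w₁ z‖ ^ 2 + ‖w₂ z‖ ^ 2 := by nlinarith [sq_nonneg (‖w₁ z‖ - ‖w₂ z‖)]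
    rw [hz, mul_one_div, div_le_div_iff₀ (by linarith) two_pos]
    linarith
  · intro δ hδ
    set r : ℝ := (1 / (1 + 2 * δ) + 1) / 2 with hrdef
    have h1 : (0:ℝ) < 1 + 2 * δ := by linarith
    have hinv : 1 / (1 + 2 * δ) < 1 := by rw [div_lt_one h1]; linarith
    have hinv0 : 0 < 1 / (1 + 2 * δ) := by positivity
    have hr0 : 0 < r := by rw [hrdef]; linarith
    have hr1 : r < 1 := by rw [hrdef]; linarith
    obtain ⟨z, hz, hge⟩ := key r hr0 hr1
    refine ⟨z, by simpa [mem_ball, dist_eq_norm, hz] using hr1, ?_⟩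
    have hS : 2 * r ≤ ‖w₁ z‖ ^ 2 + ‖w₂ z‖ ^ 2 := by nlinarith [sq_nonneg (‖w₁ z‖ - ‖w₂ z‖)]
    have hrgt : 1 / (1 + 2 * δ) < r := by rw [hrdef]; linarith
    have h2 : 1 / (‖w₁ z‖ ^ 2 + ‖w₂ z‖ ^ 2) ≤ 1 / (2 * r) := by
      apply one_div_le_one_div_of_le (by linarith) hS
    have h3 : 1 / (2 * r) < 1 / 2 + δ := by
      rw [div_lt_iff₀ (by linarith)]
      have : 1 / (1 + 2 * δ) * (1 + 2 * δ) = 1 := by field_simp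
      nlinarith
    linarith
end

section
/- Let f be meromorphic on the unit disc with f^#(z) ≥ ε > 0 for all z. Then f^#(z) ≤ (1/ε)/(1-|z|²)² for all z ∈ 𝔻. -/
open Complex Metric
open Filter Topology ComplexConjugate

/-- The spherical derivative extended by continuity at poles, using the
invariance `f^# = (1/f)^#`. -/
noncomputable def sphDerivExt (f : ℂ → ℂ) (z : ℂ) : ℝ :=
  max (sphDeriv f z) (sphDeriv (fun w => (f w)⁻¹) z)

lemma sph_nonneg (f : ℂ → ℂ) (z : ℂ) : 0 ≤ sphDeriv f z := by
  unfold sphDeriv; positivity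

lemma deriv_zero_of_discont {g : ℂ → ℂ} {p : ℂ} (h : ¬ ContinuousAt g p) :
    deriv g p = 0 := by
  apply deriv_zero_of_not_differentiableAt
  exact fun hd => h hd.continuousAt

lemma sphDeriv_inv_eq {f : ℂ → ℂ} {p : ℂ} (hd : DifferentiableAt ℂ f p) (h0 : f p ≠ 0) :
    sphDeriv (fun w => (f w)⁻¹) p = sphDeriv f p := by
  unfold sphDeriv
  rw [show deriv (fun w => (f w)⁻¹) p = -deriv f p / f p ^ 2 from deriv_inv'' hd h0]
  have h1 : (0:ℝ) < ‖f p‖ := norm_pos_iff.mpr h0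
  rw [norm_div, norm_neg]
  rw [div_div]
  congr 1
  have : ‖f p ^ 2‖ = ‖f p‖^2 := by rw [norm_pow]
  rw [this, norm_inv]
  have h4 : ‖f p‖^2 * ‖f p‖⁻¹^2 = 1 := by
    rw [← mul_pow, mul_inv_cancel₀ h1.ne']; norm_num
  nlinarith [h4]

lemma inv_inv_fun (f : ℂ → ℂ) : (fun w => ((f w)⁻¹)⁻¹) = f := funext fun w => inv_inv _

lemma sphDerivExt_inv (f : ℂ → ℂ) (z : ℂ) :
    sphDerivExt (fun w => (f w)⁻¹) z = sphDerivExt f z := by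
  unfold sphDerivExt
  rw [inv_inv_fun f, max_comm]

lemma chordal_bound (x y : ℂ) : ‖x - y‖^2 ≤ (1 + ‖x‖^2) * (1 + ‖y‖^2) := by
  have h := norm_sub_le x y
  have h1 := norm_nonneg x
  have h2 := norm_nonneg y
  have h3 := norm_nonneg (x - y)
  nlinarith [sq_nonneg (1 - ‖x‖*‖y‖), sq_nonneg (‖x‖ - ‖y‖), sq_nonneg (‖x‖+‖y‖)]

lemma analyticAt_deriv {f : ℂ → ℂ} {p : ℂ} (h : AnalyticAt ℂ f p) :
    AnalyticAt ℂ (deriv f) p := by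
  have h2 : ∀ᶠ z in 𝓝 p, AnalyticAt ℂ f z := h.eventually_analyticAt
  obtain ⟨s, hs, hopen, hmem⟩ := _root_.eventually_nhds_iff.mp h2
  have : AnalyticOnNhd ℂ f s := fun z hz => hs z hz
  exact this.deriv p hmem

lemma tendsto_norm_of_cont {g : ℂ → ℂ} {p : ℂ} (h : ContinuousAt g p) :
    Tendsto (fun z => ‖g z‖) (𝓝[≠] p) (𝓝 ‖g p‖) :=
  ((continuous_norm.continuousAt.comp h).tendsto).mono_left nhdsWithin_le_nhds

/-- At an analytic point satisfying the lower bound, the extended spherical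
derivative is the plain one. -/
lemma AA {ε : ℝ} (hε : 0 < ε) {f : ℂ → ℂ}
    (hlb : ∀ z ∈ ball (0 : ℂ) 1, ε ≤ sphDerivExt f z) {p : ℂ} (hp : p ∈ ball (0:ℂ) 1)
    (hA : AnalyticAt ℂ f p) :
    sphDerivExt f p = sphDeriv f p ∧ ε ≤ sphDeriv f p ∧ deriv f p ≠ 0 := by
  have hmax := hlb p hp
  have key : sphDeriv (fun w => (f w)⁻¹) p ≤ sphDeriv f p := by
    by_cases h0 : f p = 0
    · rcases hA.eventually_eq_zero_or_eventually_ne_zero with hz | hnz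
      · -- f ≡ 0 near p : contradiction with hlb
        exfalso
        have hd : deriv f p = 0 := by
          have : f =ᶠ[𝓝 p] (fun _ => 0) := hz
          rw [this.deriv_eq, deriv_const]
        have hd2 : deriv (fun w => (f w)⁻¹) p = 0 := by
          have : (fun w => (f w)⁻¹) =ᶠ[𝓝 p] (fun _ => 0) := by
            filter_upwards [hz] with w hw; simp [hw]
          rw [this.deriv_eq, deriv_const]
        have h1 : sphDeriv f p = 0 := by unfold sphDeriv; rw [hd]; simp
        have h2 : sphDeriv (fun w => (f w)⁻¹) p = 0 := by
          unfold sphDeriv; rw [hd2]; simp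
        rw [sphDerivExt, h1, h2] at hmax
        simp at hmax; linarith
      · -- f ≠ 0 near p, f p = 0: 1/f blows up, so it's discontinuous
        have hdisc : ¬ ContinuousAt (fun w => (f w)⁻¹) p := by
          intro hc
          have h1 : Tendsto (fun z => ‖(f z)⁻¹‖) (𝓝[≠] p) (𝓝 ‖(f p)⁻¹‖) :=
            tendsto_norm_of_cont hc
          have hb : ∀ᶠ z in 𝓝[≠] p, ‖(f z)⁻¹‖ ≤ ‖(f p)⁻¹‖ + 1 :=
            h1.eventually (Filter.Tendsto.eventually_le_const (by linarith) tendsto_id)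
          have hfc : Tendsto (fun z => ‖f z‖) (𝓝[≠] p) (𝓝 0) := by
            have := tendsto_norm_of_cont hA.continuousAt
            rwa [h0, norm_zero] at this
          have hsmall : ∀ᶠ z in 𝓝[≠] p, ‖f z‖ < (‖(f p)⁻¹‖ + 2)⁻¹ :=
            hfc.eventually (Filter.Tendsto.eventually_lt_const (by positivity) tendsto_id)
          have hbig : ∀ᶠ z in 𝓝[≠] p, (‖(f p)⁻¹‖ + 1 : ℝ) < ‖(f z)⁻¹‖ := by
            filter_upwards [hsmall, hnz] with z h1 h2
            have hz0 : (0:ℝ) < ‖f z‖ := norm_pos_iff.mpr h2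
            have hfz : ‖(f z)⁻¹‖ = ‖f z‖⁻¹ := norm_inv _
            rw [hfz]
            have h3 : (‖(f p)⁻¹‖ + 2 : ℝ) ≤ ‖f z‖⁻¹ := by
              rw [le_inv_comm₀ (by positivity) hz0]
              exact le_of_lt h1
            linarith
          have := (hb.and hbig).exists.choose_spec
          linarith [this.1, this.2]
        have : deriv (fun w => (f w)⁻¹) p = 0 := deriv_zero_of_discont hdisc
        unfold sphDeriv
        rw [this]
        simp
        positivity
    · exact le_of_eq (sphDeriv_inv_eq hA.differentiableAt h0)
  have heq : sphDerivExt f p = sphDeriv f p := max_eq_left key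
  refine ⟨heq, by rw [← heq]; exact hmax, ?_⟩
  intro hd0
  have : sphDeriv f p = 0 := by unfold sphDeriv; rw [hd0]; simp
  rw [heq, this] at hmax; linarith

lemma value_of_cont {g h : ℂ → ℂ} {p : ℂ} (heq : ∀ᶠ z in 𝓝[≠] p, g z = h z)
    (hh : ContinuousAt h p) (hc : ContinuousAt g p) : g p = h p := by
  have t1 : Tendsto g (𝓝[≠] p) (𝓝 (g p)) := hc.tendsto.mono_left nhdsWithin_le_nhds
  have t2 : Tendsto g (𝓝[≠] p) (𝓝 (h p)) :=
    (hh.tendsto.mono_left nhdsWithin_le_nhds).congr'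
      (heq.mono fun z hz => hz.symm)
  exact tendsto_nhds_unique t1 t2

lemma discont_of_punctured_ne {g h : ℂ → ℂ} {p : ℂ} (heq : ∀ᶠ z in 𝓝[≠] p, g z = h z)
    (hh : ContinuousAt h p) (hne : g p ≠ h p) : ¬ ContinuousAt g p :=
  fun hc => hne (value_of_cont heq hh hc)

lemma eventuallyEq_nhds_of_punctured {g h : ℂ → ℂ} {p : ℂ}
    (heq : ∀ᶠ z in 𝓝[≠] p, g z = h z) (hv : g p = h p) : g =ᶠ[𝓝 p] h := by
  have : ∀ᶠ z in 𝓝[≠] p ⊔ pure p, g z = h z := by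
    rw [eventually_sup]
    exact ⟨heq, by simpa using hv⟩
  rwa [nhdsNE_sup_pure] at this

lemma analyticAt_of_punctured {g h : ℂ → ℂ} {p : ℂ}
    (heq : ∀ᶠ z in 𝓝[≠] p, g z = h z) (hv : g p = h p)
    (hh : AnalyticAt ℂ h p) : AnalyticAt ℂ g p :=
  hh.congr (eventuallyEq_nhds_of_punctured heq hv).symm

lemma deriv_zero_of_punctured_zero {g : ℂ → ℂ} {p : ℂ}
    (h : ∀ᶠ z in 𝓝[≠] p, g z = 0) : deriv g p = 0 := by
  by_cases hgp : g p = 0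
  · have : g =ᶠ[𝓝 p] (fun _ => 0) := eventuallyEq_nhds_of_punctured h hgp
    rw [this.deriv_eq, deriv_const]
  · exact deriv_zero_of_discont
      (discont_of_punctured_ne h continuousAt_const hgp)

lemma diff_of_deriv_ne {g : ℂ → ℂ} {p : ℂ} (h : deriv g p ≠ 0) :
    DifferentiableAt ℂ g p := by
  by_contra hd
  exact h (deriv_zero_of_not_differentiableAt hd)

lemma not_cont_inv_of_tendsto_zero {h : ℂ → ℂ} {p : ℂ} (hc : ContinuousAt h p)
    (h0 : h p = 0) (hne : ∀ᶠ z in 𝓝[≠] p, h z ≠ 0) {v : ℂ → ℂ}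
    (hveq : ∀ᶠ z in 𝓝[≠] p, v z = (h z)⁻¹) : ¬ ContinuousAt v p := by
  intro hcv
  have h1 : Tendsto (fun z => ‖v z‖) (𝓝[≠] p) (𝓝 ‖v p‖) := tendsto_norm_of_cont hcv
  have hb : ∀ᶠ z in 𝓝[≠] p, ‖v z‖ ≤ ‖v p‖ + 1 :=
    h1.eventually_le_const (by linarith)
  have hfc : Tendsto (fun z => ‖h z‖) (𝓝[≠] p) (𝓝 0) := by
    have := tendsto_norm_of_cont hc
    rwa [h0, norm_zero] at this
  have hsmall : ∀ᶠ z in 𝓝[≠] p, ‖h z‖ < (‖v p‖ + 2)⁻¹ :=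
    hfc.eventually_lt_const (by positivity)
  have hbig : ∀ᶠ z in 𝓝[≠] p, (‖v p‖ + 1 : ℝ) < ‖v z‖ := by
    filter_upwards [hsmall, hne, hveq] with z h1 h2 h3
    have hz0 : (0:ℝ) < ‖h z‖ := norm_pos_iff.mpr h2
    have hfz : ‖v z‖ = ‖h z‖⁻¹ := by rw [h3, norm_inv]
    rw [hfz]
    have h3' : (‖v p‖ + 2 : ℝ) ≤ ‖h z‖⁻¹ := by
      rw [le_inv_comm₀ (by positivity) hz0]
      exact le_of_lt h1
    linarith
  have := (hb.and hbig).exists.choose_spec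
  linarith [this.1, this.2]

lemma deriv_inv_ne_zero_of_deriv_zero {ε : ℝ} (hε : 0 < ε) {f : ℂ → ℂ}
    (hlb : ∀ z ∈ ball (0 : ℂ) 1, ε ≤ sphDerivExt f z) {p : ℂ} (hp : p ∈ ball (0:ℂ) 1)
    (hdf : deriv f p = 0) : deriv (fun w => (f w)⁻¹) p ≠ 0 := by
  intro h0
  have h1 : sphDeriv f p = 0 := by unfold sphDeriv; rw [hdf]; simp
  have h2 : sphDeriv (fun w => (f w)⁻¹) p = 0 := by unfold sphDeriv; rw [h0]; simp
  have := hlb p hp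
  rw [sphDerivExt, h1, h2] at this
  simp at this; linarith

/-- Structure of `f` at a non-analytic point of the disc: it is a genuine pole,
`1/f` is analytic there with value 0 and nonzero derivative. -/
lemma BB {ε : ℝ} (hε : 0 < ε) {f : ℂ → ℂ} (hf : MeromorphicOn f (ball (0:ℂ) 1))
    (hlb : ∀ z ∈ ball (0 : ℂ) 1, ε ≤ sphDerivExt f z) {p : ℂ} (hp : p ∈ ball (0:ℂ) 1)
    (hN : ¬ AnalyticAt ℂ f p) :
    AnalyticAt ℂ (fun w => (f w)⁻¹) p ∧ (f p)⁻¹ = 0 ∧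
      deriv (fun w => (f w)⁻¹) p ≠ 0 ∧
      ∀ᶠ z in 𝓝[≠] p, f z ≠ 0 ∧ AnalyticAt ℂ f z := by
  have hm := hf p hp
  by_cases ho : meromorphicOrderAt f p = ⊤
  · exfalso
    have hz : ∀ᶠ z in 𝓝[≠] p, f z = 0 := meromorphicOrderAt_eq_top_iff.mp ho
    have hz' : ∀ᶠ z in 𝓝[≠] p, (f z)⁻¹ = 0 := hz.mono fun z h => by rw [h, inv_zero]
    have h1 : deriv f p = 0 := deriv_zero_of_punctured_zero hz
    have h2 := deriv_inv_ne_zero_of_deriv_zero hε hlb hp h1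
    exact h2 (deriv_zero_of_punctured_zero hz')
  · obtain ⟨n, hn⟩ := WithTop.ne_top_iff_exists.mp ho
    obtain ⟨g, hg_an, hg_ne, hg_eq⟩ := (meromorphicOrderAt_eq_int_iff (n := n) hm).mp hn.symm
    have hg_ne_ev : ∀ᶠ z in 𝓝 p, g z ≠ 0 := hg_an.continuousAt.eventually_ne hg_ne
    by_cases hn0 : 0 ≤ n
    · -- "order ≥ 0" case: leads to a contradiction with non-analyticity
      exfalso
      lift n to ℕ using hn0
      set h : ℂ → ℂ := fun z => (z - p) ^ n * g z with hh
      have hh_an : AnalyticAt ℂ h p :=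
        (((analyticAt_id.sub analyticAt_const).pow n).mul hg_an)
      have heq : ∀ᶠ z in 𝓝[≠] p, f z = h z := by
        filter_upwards [hg_eq] with z hz
        rw [hz, hh]; push_cast [zpow_natCast]; rw [smul_eq_mul]
      by_cases hfp : f p = h p
      · exact hN (analyticAt_of_punctured heq hfp hh_an)
      · have hdf : deriv f p = 0 :=
          deriv_zero_of_discont (discont_of_punctured_ne heq hh_an.continuousAt hfp)
        have hdu : deriv (fun w => (f w)⁻¹) p ≠ 0 :=
          deriv_inv_ne_zero_of_deriv_zero hε hlb hp hdf
        have hcu : ContinuousAt (fun w => (f w)⁻¹) p :=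
          (diff_of_deriv_ne hdu).continuousAt
        have hueq : ∀ᶠ z in 𝓝[≠] p, (f z)⁻¹ = (h z)⁻¹ :=
          heq.mono fun z hz => by rw [hz]
        by_cases hhp : h p = 0
        · -- h p = 0 : then 1/f blows up, contradicting continuity of 1/f
          have hne : ∀ᶠ z in 𝓝[≠] p, h z ≠ 0 := by
            filter_upwards [hg_ne_ev.filter_mono nhdsWithin_le_nhds,
              self_mem_nhdsWithin] with z h1 (h2 : z ≠ p)
            exact mul_ne_zero (pow_ne_zero _ (sub_ne_zero.mpr h2)) h1
          exact not_cont_inv_of_tendsto_zero hh_an.continuousAt hhp hne hueq hcu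
        · -- h p ≠ 0 : then 1/f and hence f is analytic at p, contradiction
          have hval : (f p)⁻¹ = (h p)⁻¹ :=
            value_of_cont hueq (hh_an.continuousAt.inv₀ hhp) hcu
          have hu_an : AnalyticAt ℂ (fun w => (f w)⁻¹) p :=
            analyticAt_of_punctured hueq hval (hh_an.inv hhp)
          have : AnalyticAt ℂ f p := by
            rw [← inv_inv_fun f]
            exact hu_an.inv (by rw [hval]; exact inv_ne_zero hhp)
          exact hN this
    · -- genuine pole case
      push_neg at hn0
      set m : ℕ := (-n).toNat with hmdef
      have hm1 : 1 ≤ m := by rw [hmdef]; omega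
      have hnm : (m : ℤ) = -n := Int.toNat_of_nonneg (by omega)
      set ht : ℂ → ℂ := fun z => (z - p) ^ m * (g z)⁻¹ with hht
      have ht_an : AnalyticAt ℂ ht p :=
        ((analyticAt_id.sub analyticAt_const).pow m).mul (hg_an.inv hg_ne)
      have htp : ht p = 0 := by
        rw [hht]; simp only []
        rw [sub_self, zero_pow (by omega), zero_mul]
      have hgz : ∀ᶠ z in 𝓝[≠] p, g z ≠ 0 := hg_ne_ev.filter_mono nhdsWithin_le_nhds
      have hueq : ∀ᶠ z in 𝓝[≠] p, (f z)⁻¹ = ht z := by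
        filter_upwards [hg_eq, hgz, self_mem_nhdsWithin] with z hz hgz' (hzp : z ≠ p)
        rw [hz, smul_eq_mul, mul_inv, hht]
        simp only []
        congr 1
        rw [← zpow_natCast (z - p) m, hnm, zpow_neg]
      have hfne : ∀ᶠ z in 𝓝[≠] p, f z ≠ 0 := by
        filter_upwards [hg_eq, hgz, self_mem_nhdsWithin] with z hz hgz' (hzp : z ≠ p)
        rw [hz, smul_eq_mul]
        exact mul_ne_zero (zpow_ne_zero _ (sub_ne_zero.mpr hzp)) hgz'
      have htne : ∀ᶠ z in 𝓝[≠] p, ht z ≠ 0 := by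
        filter_upwards [hueq, hfne] with z h1 h2
        rw [← h1]; exact inv_ne_zero h2
      have hfeq : ∀ᶠ z in 𝓝[≠] p, f z = (ht z)⁻¹ := by
        filter_upwards [hueq] with z h1
        rw [← h1, inv_inv]
      have hdf : deriv f p = 0 := by
        apply deriv_zero_of_discont
        exact fun hc =>
          not_cont_inv_of_tendsto_zero ht_an.continuousAt htp htne hfeq hc
      have hdu : deriv (fun w => (f w)⁻¹) p ≠ 0 :=
        deriv_inv_ne_zero_of_deriv_zero hε hlb hp hdf
      have hcu : ContinuousAt (fun w => (f w)⁻¹) p := (diff_of_deriv_ne hdu).continuousAt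
      have hval : (f p)⁻¹ = 0 := by
        have := value_of_cont hueq ht_an.continuousAt hcu
        rw [this, htp]
      have hu_an : AnalyticAt ℂ (fun w => (f w)⁻¹) p :=
        analyticAt_of_punctured hueq (by rw [hval, htp]) ht_an
      refine ⟨hu_an, hval, hdu, ?_⟩
      have hev_an : ∀ᶠ z in 𝓝 p, AnalyticAt ℂ (fun w => (f w)⁻¹) z :=
        hu_an.eventually_analyticAt
      filter_upwards [hfne, hev_an.filter_mono nhdsWithin_le_nhds] with z h1 h2
      refine ⟨h1, ?_⟩
      rw [← inv_inv_fun f]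
      exact h2.inv (inv_ne_zero h1)

lemma sphere_ineq {z₀ z : ℂ} {r s : ℝ} (hr : ‖z₀‖ = r) (hs : ‖z‖ = s)
    (hr0 : 0 ≤ r) (hrs : r < s) (hs1 : s < 1) :
    ‖1 - conj z₀ * z‖^2 * (s - r)^2 ≤ (1 - r*s)^2 * ‖z - z₀‖^2 := by
  set w := conj z₀ * z with hw
  have hwn : ‖w‖ = r * s := by
    rw [hw, norm_mul, RCLike.norm_conj, hr, hs]
  have ht := Complex.abs_re_le_norm w
  rw [hwn] at ht
  have ht1 : w.re ≤ r*s := (abs_le.mp ht).2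
  have ht2 : -(r*s) ≤ w.re := (abs_le.mp ht).1
  have h1 : ‖1 - w‖^2 = 1 + (r*s)^2 - 2*w.re := by
    rw [Complex.sq_norm, Complex.normSq_sub, Complex.normSq_one,
      one_mul, Complex.conj_re, Complex.normSq_eq_norm_sq, hwn]
  have hcomm : z * conj z₀ = w := by rw [hw, mul_comm]
  have h2 : ‖z - z₀‖^2 = s^2 + r^2 - 2*w.re := by
    rw [Complex.sq_norm, Complex.normSq_sub, hcomm,
      Complex.normSq_eq_norm_sq, Complex.normSq_eq_norm_sq, hs, hr]
  rw [h1, h2]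
  have e1 : 0 ≤ r*s - w.re := by linarith
  have e2 : 0 ≤ 1 - r^2 := by nlinarith
  have e3 : 0 ≤ 1 - s^2 := by nlinarith
  nlinarith [mul_nonneg (mul_nonneg e1 e2) e3]

open Set in
lemma DD {G K : ℂ → ℂ} {z₀ : ℂ} {C : ℝ} (hC : 0 ≤ C) (hz₀ : z₀ ∈ ball (0:ℂ) 1)
    (hG : ∀ z ∈ ball (0:ℂ) 1, AnalyticAt ℂ G z) (hb : ∀ z ∈ ball (0:ℂ) 1, ‖G z‖ ≤ C)
    (hK : AnalyticAt ℂ K z₀) (heq : ∀ᶠ z in 𝓝 z₀, G z = (z - z₀)^2 * K z) :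
    ‖K z₀‖ * (1 - ‖z₀‖^2)^2 ≤ C := by
  classical
  set r := ‖z₀‖ with hrdef
  have hr1 : r < 1 := by rwa [mem_ball_zero_iff] at hz₀
  have hr0 : 0 ≤ r := norm_nonneg _
  set L := fun z => if z = z₀ then K z₀ * (1 - conj z₀ * z₀)^2
    else G z * (1 - conj z₀ * z)^2 / (z - z₀)^2 with hL
  have step1 : L =ᶠ[𝓝 z₀] fun z => K z * (1 - conj z₀ * z)^2 := by
    filter_upwards [heq] with z hz
    by_cases h : z = z₀
    · subst h; simp [hL]
    · simp only [hL, if_neg h]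
      rw [hz]
      field_simp [sub_ne_zero.mpr h]
  have stepdiff : DifferentiableOn ℂ L (ball (0:ℂ) 1) := by
    intro z hz
    by_cases h : z = z₀
    · rw [h]
      have hd : DifferentiableAt ℂ (fun z => K z * (1 - conj z₀ * z)^2) z₀ :=
        hK.differentiableAt.mul
          (((differentiableAt_const _).sub
            ((differentiableAt_const _).mul differentiableAt_id)).pow 2)
      exact (hd.congr_of_eventuallyEq step1).differentiableWithinAt
    · have hev : ∀ᶠ w in 𝓝 z, L w = G w * (1 - conj z₀ * w)^2 / (w - z₀)^2 := by
        filter_upwards [eventually_ne_nhds h] with w hw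
        simp only [hL, if_neg hw]
      have hd : DifferentiableAt ℂ (fun w => G w * (1 - conj z₀ * w)^2 / (w - z₀)^2) z := by
        apply DifferentiableAt.div
        · exact (hG z hz).differentiableAt.mul
            (((differentiableAt_const _).sub
              ((differentiableAt_const _).mul differentiableAt_id)).pow 2)
        · exact (differentiableAt_id.sub (differentiableAt_const _)).pow 2
        · exact pow_ne_zero _ (sub_ne_zero.mpr h)
      exact (hd.congr_of_eventuallyEq hev).differentiableWithinAt
  have stepmax : ∀ s : ℝ, r < s → s < 1 → ‖K z₀‖ * (1 - r^2)^2 ≤ C * (1 - r*s)^2 / (s - r)^2 := by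
    intro s hrs hs1
    have hs0 : 0 < s := lt_of_le_of_lt hr0 hrs
    have hsub : closedBall (0:ℂ) s ⊆ ball (0:ℂ) 1 := closedBall_subset_ball hs1
    have hdc : DiffContOnCl ℂ L (ball (0:ℂ) s) := by
      constructor
      · exact stepdiff.mono (ball_subset_ball hs1.le)
      · rw [closure_ball (0:ℂ) hs0.ne']
        exact stepdiff.continuousOn.mono hsub
    have hfr : ∀ z ∈ frontier (ball (0:ℂ) s), ‖L z‖ ≤ C * (1 - r*s)^2 / (s - r)^2 := by
      rw [frontier_ball (0:ℂ) hs0.ne']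
      intro z hzs
      have hznorm : ‖z‖ = s := by rwa [mem_sphere_zero_iff_norm] at hzs
      have hzne : z ≠ z₀ := by
        intro he; rw [he] at hznorm; rw [← hrdef] at hznorm; linarith [hznorm]
      have hzball : z ∈ ball (0:ℂ) 1 := mem_ball_zero_iff.mpr (by rw [hznorm]; exact hs1)
      simp only [hL, if_neg hzne]
      rw [norm_div, norm_mul, norm_pow, norm_pow]
      have key := sphere_ineq rfl hznorm hr0 hrs hs1
      have hzz : (0:ℝ) < ‖z - z₀‖ := norm_pos_iff.mpr (sub_ne_zero.mpr hzne)
      have hsr : (0:ℝ) < s - r := by linarith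
      have hrs1 : (0:ℝ) < 1 - r*s := by nlinarith
      rw [div_le_div_iff₀ (by positivity) (by positivity)]
      have hGz := hb z hzball
      have h1 : ‖G z‖ * (‖1 - conj z₀ * z‖^2 * (s-r)^2) ≤ C * ((1 - r*s)^2 * ‖z - z₀‖^2) :=
        mul_le_mul hGz key (by positivity) hC
      nlinarith [h1]
    have hmem : z₀ ∈ closure (ball (0:ℂ) s) := by
      rw [closure_ball (0:ℂ) hs0.ne']
      exact mem_closedBall_zero_iff.mpr (by linarith)
    have hmain := Complex.norm_le_of_forall_mem_frontier_norm_le isBounded_ball hdc hfr hmem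
    have hLz₀ : ‖L z₀‖ = ‖K z₀‖ * (1 - r^2)^2 := by
      simp only [hL, if_pos rfl]
      rw [norm_mul, norm_pow]
      have hc : conj z₀ * z₀ = ((r^2 : ℝ) : ℂ) := by
        rw [mul_comm, Complex.mul_conj, hrdef, Complex.normSq_eq_norm_sq]
      rw [hc]
      have : (1 : ℂ) - ((r^2 : ℝ) : ℂ) = (((1 - r^2 : ℝ)) : ℂ) := by push_cast; ring
      rw [this, Complex.norm_real, Real.norm_eq_abs, _root_.abs_of_nonneg (by nlinarith)]
    rw [hLz₀] at hmain
    exact hmain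
  have hlim : Tendsto (fun s : ℝ => C * (1 - r*s)^2/(s - r)^2) (𝓝[<] (1:ℝ))
      (𝓝 (C * (1 - r*1)^2/(1 - r)^2)) := by
    apply Tendsto.mono_left _ nhdsWithin_le_nhds
    apply ContinuousAt.tendsto
    apply ContinuousAt.div
    · fun_prop
    · fun_prop
    · exact pow_ne_zero _ (sub_ne_zero.mpr (by linarith))
  have hev : ∀ᶠ s in 𝓝[<] (1:ℝ), ‖K z₀‖*(1 - r^2)^2 ≤ C*(1 - r*s)^2/(s - r)^2 := by
    have hIoo : Ioo r 1 ∈ 𝓝[<] (1:ℝ) := Ioo_mem_nhdsLT_of_mem ⟨hr1, le_refl 1⟩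
    filter_upwards [hIoo] with s hsm
    exact stepmax s hsm.1 hsm.2
  have hfin := ge_of_tendsto hlim hev
  have h1r : (1:ℝ) - r ≠ 0 := sub_ne_zero.mpr (by linarith)
  have hsimp : C * (1 - r*1)^2/(1 - r)^2 = C := by
    rw [show (1 - r*1 : ℝ) = 1 - r by ring, mul_div_assoc,
      div_self (pow_ne_zero _ h1r), mul_one]
  rw [hsimp] at hfin
  exact hfin

set_option maxHeartbeats 1000000 in
lemma EE {ε : ℝ} (hε : 0 < ε) {f : ℂ → ℂ} (hf : MeromorphicOn f (ball (0:ℂ) 1))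
    (hlb : ∀ z ∈ ball (0 : ℂ) 1, ε ≤ sphDerivExt f z) {z₀ : ℂ} (hz₀ : z₀ ∈ ball (0:ℂ) 1)
    (hA : AnalyticAt ℂ f z₀) :
    sphDeriv f z₀ ≤ (1/ε) / (1 - ‖z₀‖^2)^2 := by
  classical
  obtain ⟨hext, hsph, hder⟩ := AA hε hlb hz₀ hA
  set a := f z₀ with ha
  set c : ℝ := 1 + ‖a‖^2 with hc
  have hcpos : 0 < c := by positivity
  have hcc : ‖(c:ℂ)‖ = c := by
    rw [Complex.norm_real, Real.norm_eq_abs, _root_.abs_of_nonneg hcpos.le]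
  have hcne : ((c:ℝ):ℂ) ≠ 0 := Complex.ofReal_ne_zero.mpr hcpos.ne'
  set A : ℂ → ℂ := fun z => (f z - a)^2 / ((c:ℝ) * deriv f z) with hA_def
  set B : ℂ → ℂ := fun z =>
    -(1 - a * (f z)⁻¹)^2 / ((c:ℝ) * deriv (fun w => (f w)⁻¹) z) with hB_def
  set G : ℂ → ℂ := fun z => if AnalyticAt ℂ f z then A z else B z with hG_def
  have boundA : ∀ z ∈ ball (0:ℂ) 1, AnalyticAt ℂ f z → ‖A z‖ ≤ 1/ε := by
    intro z hz hAz
    obtain ⟨_, hsz, hdz⟩ := AA hε hlb hz hAz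
    have h2 : (0:ℝ) < 1 + ‖f z‖^2 := by positivity
    have hd : ε * (1 + ‖f z‖^2) ≤ ‖deriv f z‖ := by
      rw [sphDeriv, le_div_iff₀ h2] at hsz; linarith [hsz]
    have hch := chordal_bound (f z) a
    simp only [hA_def]
    rw [norm_div, norm_pow, norm_mul, hcc]
    have hdpos : 0 < ‖deriv f z‖ := norm_pos_iff.mpr hdz
    rw [div_le_div_iff₀ (by positivity) hε]
    have k1 : ε * ‖f z - a‖^2 ≤ ε * ((1 + ‖f z‖^2) * c) := by
      rw [hc]; nlinarith [hch]
    have k2 : ε * ((1 + ‖f z‖^2) * c) ≤ ‖deriv f z‖ * c := by nlinarith [hd]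
    nlinarith [k1, k2]
  have hGan : ∀ z ∈ ball (0:ℂ) 1, AnalyticAt ℂ G z ∧ ‖G z‖ ≤ 1/ε := by
    intro p hp
    by_cases hAp : AnalyticAt ℂ f p
    · obtain ⟨_, hsp, hdp⟩ := AA hε hlb hp hAp
      have hAan : AnalyticAt ℂ A p := by
        apply AnalyticAt.div
        · exact (hAp.sub analyticAt_const).pow 2
        · exact analyticAt_const.mul (analyticAt_deriv hAp)
        · exact mul_ne_zero hcne hdp
      have hGeq : G =ᶠ[𝓝 p] A := by
        filter_upwards [hAp.eventually_analyticAt] with w hw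
        simp only [hG_def, if_pos hw]
      refine ⟨hAan.congr hGeq.symm, ?_⟩
      have hGA : G p = A p := by simp only [hG_def, if_pos hAp]
      rw [hGA]; exact boundA p hp hAp
    · obtain ⟨hu_an, hval, hdu, hev⟩ := BB hε hf hlb hp hAp
      have hBan : AnalyticAt ℂ B p := by
        apply AnalyticAt.div
        · exact ((analyticAt_const.sub (analyticAt_const.mul hu_an)).pow 2).neg
        · exact analyticAt_const.mul (analyticAt_deriv hu_an)
        · exact mul_ne_zero hcne hdu
      have hGeq : G =ᶠ[𝓝 p] B := by
        apply eventuallyEq_nhds_of_punctured _ (by simp only [hG_def, if_neg hAp])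
        have hduev : ∀ᶠ z in 𝓝 p, deriv (fun w => (f w)⁻¹) z ≠ 0 :=
          (analyticAt_deriv hu_an).continuousAt.eventually_ne hdu
        have huev : ∀ᶠ z in 𝓝 p, AnalyticAt ℂ (fun w => (f w)⁻¹) z :=
          hu_an.eventually_analyticAt
        filter_upwards [hev, hduev.filter_mono nhdsWithin_le_nhds,
          huev.filter_mono nhdsWithin_le_nhds] with z hz hdz huz
        obtain ⟨hfz, hfan⟩ := hz
        simp only [hG_def, if_pos hfan, hA_def, hB_def]
        have hinv : (f z)⁻¹ ≠ 0 := inv_ne_zero hfz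
        have hderf : deriv f z = -(deriv (fun w => (f w)⁻¹) z) / ((f z)⁻¹)^2 := by
          conv_lhs => rw [← inv_inv_fun f]
          exact deriv_inv'' huz.differentiableAt hinv
        rw [hderf]
        field_simp
      refine ⟨hBan.congr hGeq.symm, ?_⟩
      have hcont : ContinuousAt G p := (hBan.congr hGeq.symm).continuousAt
      have hGb : ∀ᶠ z in 𝓝[≠] p, ‖G z‖ ≤ 1/ε := by
        have hball : ∀ᶠ z in 𝓝 p, z ∈ ball (0:ℂ) 1 :=
          eventually_of_mem (isOpen_ball.mem_nhds hp) fun z hz => hz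
        filter_upwards [hev, hball.filter_mono nhdsWithin_le_nhds] with z hz hzb
        have hGA : G z = A z := by simp only [hG_def, if_pos hz.2]
        rw [hGA]; exact boundA z hzb hz.2
      exact le_of_tendsto (tendsto_norm_of_cont hcont) hGb
  set K : ℂ → ℂ := fun z => (dslope f z₀ z)^2 / ((c:ℝ) * deriv f z) with hK_def
  have hKan : AnalyticAt ℂ K z₀ := by
    obtain ⟨pser, hpser⟩ := id hA
    apply AnalyticAt.div
    · exact (hpser.has_fpower_series_dslope_fslope.analyticAt).pow 2
    · exact analyticAt_const.mul (analyticAt_deriv hA)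
    · exact mul_ne_zero hcne hder
  have heqG : ∀ᶠ z in 𝓝 z₀, G z = (z - z₀)^2 * K z := by
    filter_upwards [hA.eventually_analyticAt] with z hz
    simp only [hG_def, if_pos hz, hA_def, hK_def]
    have hfs : f z - a = (z - z₀) * dslope f z₀ z := by
      rw [ha, ← smul_eq_mul, sub_smul_dslope f z₀ z]
    rw [hfs, mul_pow, mul_div_assoc]
  have hDD := DD (by positivity) hz₀ (fun z hz => (hGan z hz).1)
    (fun z hz => (hGan z hz).2) hKan heqG
  have hKz : ‖K z₀‖ = sphDeriv f z₀ := by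
    simp only [hK_def]
    rw [dslope_same f z₀]
    have hsimp : (deriv f z₀)^2 / ((c:ℝ) * deriv f z₀) = deriv f z₀ / (c:ℝ) := by
      field_simp
    rw [hsimp, norm_div, hcc, sphDeriv, hc, ha]
  rw [← hKz]
  have hr1 : ‖z₀‖ < 1 := mem_ball_zero_iff.mp hz₀
  have hpos0 : 0 < 1 - ‖z₀‖^2 := by nlinarith [norm_nonneg z₀]
  have hpos : 0 < (1 - ‖z₀‖^2)^2 := by positivity
  rw [le_div_iff₀ hpos]
  exact hDD


/-- If `f` is meromorphic on the unit disc with `f^# ≥ ε > 0`, then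
`f^#(z) ≤ (1/ε)/(1-|z|²)²` for all `z` in the disc. -/
theorem stmt17 (ε : ℝ) (hε : 0 < ε) (f : ℂ → ℂ)
    (hf : MeromorphicOn f (ball (0 : ℂ) 1))
    (hlb : ∀ z ∈ ball (0 : ℂ) 1, ε ≤ sphDerivExt f z) :
    ∀ z ∈ ball (0 : ℂ) 1, sphDerivExt f z ≤ (1 / ε) / (1 - ‖z‖ ^ 2) ^ 2 := by
  intro z hz
  by_cases hA : AnalyticAt ℂ f z
  · rw [(AA hε hlb hz hA).1]
    exact EE hε hf hlb hz hA
  · obtain ⟨hu_an, hval, hdu, hev⟩ := BB hε hf hlb hz hA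
    have hfm : MeromorphicOn (fun w => (f w)⁻¹) (ball (0:ℂ) 1) :=
      fun x hx => (hf x hx).inv
    have hlb' : ∀ w ∈ ball (0:ℂ) 1, ε ≤ sphDerivExt (fun w => (f w)⁻¹) w := by
      intro w hw; rw [sphDerivExt_inv]; exact hlb w hw
    have h1 := EE hε hfm hlb' hz hu_an
    have h2 := (AA hε hlb' hz hu_an).1
    rw [← sphDerivExt_inv f z, h2]
    exact h1
end
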